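/- arXiv:1002.1053 — 6 statements merged into one kernel-verified Lean document; each statement's English description precedes it below -/
import Mathlib

section
/- Let X, Y, H be elements of an associative algebra satisfying [H, Y] = −Y, [H, X] = X, [Y, X] = H. Suppose v is a module element with Y v = 0 and H v = (ℓ + n) v. Then for all j ≤ k, Y^j (X^k v) = c_{j,k,ℓ} X^{k−j} v, where c_{j,k,ℓ} = (1/2^j) · (k!/(k−j)!) · ((2n + 2ℓ + k − 1)!/(2n + 2ℓ + k − j − 1)!), and Y^j (X^k v) = 0 for j > k. -/
open Finset

/-- with `X, Y, H` satisfying `[H,Y] = −Y`, `[H,X] = X`, `[Y,X] = H` and `v` a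
symplectic monogenic of degree `ℓ` (`Y v = 0`, `H v = (ℓ + n) v`), one has for `j ≤ k`
`Y^j (X^k v) = c_{j,k,ℓ} X^{k−j} v` with
`c_{j,k,ℓ} = (1/2^j) · k!/(k−j)! · (2n+2ℓ+k−1)!/(2n+2ℓ+k−j−1)!`
(the factorial quotients interpreted as falling-factorial products), and
`Y^j (X^k v) = 0` for `j > k`. -/
theorem monogenic_pow_Y_pow_X {M : Type*} [AddCommGroup M] [Module ℝ M]
    (X Y H : Module.End ℝ M) (n ℓ : ℕ) (hn : 1 ≤ n)
    (hHY : H * Y - Y * H = -Y) (hHX : H * X - X * H = X) (hYX : Y * X - X * Y = H)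
    (v : M) (hYv : Y v = 0) (hHv : H v = ((ℓ : ℝ) + n) • v) :
    (∀ j k : ℕ, j ≤ k →
      (Y ^ j) ((X ^ k) v)
        = ((1 / 2 ^ j : ℝ) * (∏ i ∈ range j, ((k : ℝ) - i))
            * ∏ i ∈ range j, (2 * (n : ℝ) + 2 * ℓ + k - 1 - i)) • ((X ^ (k - j)) v))
    ∧ ∀ j k : ℕ, k < j → (Y ^ j) ((X ^ k) v) = 0 := by
  -- commutation relations applied to vectors
  have hXw : ∀ w : M, H (X w) = X (H w) + X w := by
    intro w
    have h := congrArg (fun f : Module.End ℝ M => f w) hHX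
    simp only [LinearMap.sub_apply, Module.End.mul_apply] at h
    have := sub_eq_iff_eq_add.mp h
    rw [this, add_comm]
  have hYXw : ∀ w : M, Y (X w) = X (Y w) + H w := by
    intro w
    have h := congrArg (fun f : Module.End ℝ M => f w) hYX
    simp only [LinearMap.sub_apply, Module.End.mul_apply] at h
    have := sub_eq_iff_eq_add.mp h
    rw [this, add_comm]
  -- H acts on X^k v as scalar ℓ + n + k
  have hH : ∀ k : ℕ, H ((X ^ k) v) = ((ℓ : ℝ) + n + k) • (X ^ k) v := by
    intro k
    induction k with
    | zero => simpa using hHv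
    | succ k ih =>
      rw [pow_succ', Module.End.mul_apply, hXw, ih, map_smul, ← Module.End.mul_apply X (X ^ k),
        ← pow_succ']
      have h1 : ((ℓ : ℝ) + n + (k + 1 : ℕ)) = ((ℓ : ℝ) + n + k) + 1 := by push_cast; ring
      rw [h1]
      simp only [add_smul, one_smul]
  -- Y acts on X^k v
  have hY1 : ∀ k : ℕ, Y ((X ^ k) v)
      = ((k : ℝ) / 2 * (2 * n + 2 * ℓ + k - 1)) • (X ^ (k - 1)) v := by
    intro k
    induction k with
    | zero => simp [hYv]
    | succ k ih =>
      rw [pow_succ', Module.End.mul_apply, hYXw, ih, hH, map_smul]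
      rcases Nat.eq_zero_or_pos k with hk | hk
      · subst hk
        simp only [Nat.cast_zero, zero_div, zero_mul, zero_smul, zero_add, pow_zero,
          Module.End.one_apply, Nat.sub_self]
        congr 1
        push_cast
        ring
      · have hx : X ((X ^ (k - 1)) v) = (X ^ k) v := by
          rw [← Module.End.mul_apply X (X ^ (k - 1)), ← pow_succ', Nat.sub_add_cancel hk]
        rw [hx]
        have : (k + 1 : ℕ) - 1 = k := rfl
        rw [this, ← add_smul]
        congr 1
        push_cast
        ring
  have main : ∀ j k : ℕ, j ≤ k →
      (Y ^ j) ((X ^ k) v)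
        = ((1 / 2 ^ j : ℝ) * (∏ i ∈ range j, ((k : ℝ) - i))
            * ∏ i ∈ range j, (2 * (n : ℝ) + 2 * ℓ + k - 1 - i)) • ((X ^ (k - j)) v) := by
    intro j
    induction j with
    | zero => intro k _; simp
    | succ j ih =>
      intro k hjk
      have hj : j ≤ k := Nat.le_of_succ_le hjk
      rw [pow_succ', Module.End.mul_apply, ih k hj, map_smul, hY1, smul_smul]
      have hsub : k - j - 1 = k - (j + 1) := by omega
      rw [hsub]
      congr 1
      rw [prod_range_succ, prod_range_succ, Nat.cast_sub hj]
      push_cast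
      ring
  refine ⟨main, ?_⟩
  intro j k hkj
  obtain ⟨m, rfl⟩ : ∃ m, j = (m + 1) + k := ⟨j - k - 1, by omega⟩
  rw [pow_add, Module.End.mul_apply, main k k le_rfl, map_smul]
  have h0 : (Y ^ (m + 1)) ((X ^ (k - k)) v) = 0 := by
    rw [Nat.sub_self, pow_zero, Module.End.one_apply, pow_succ, Module.End.mul_apply, hYv,
      map_zero]
  rw [h0, smul_zero]
end

section
/- Suppose m_0, m_1, ..., m_k are vectors with Y m_i = 0 and H m_i = (i + n) m_i (symplectic monogenics of degrees 0,...,k), where X, Y, H satisfy [H,Y] = −Y, [H,X] = X, [Y,X] = H and n ≥ 1. If Σ_{i=0}^k X^{k−i} m_i = 0, then X^{k−i} m_i = 0 for each i (hence m_i = 0 for each i by injectivity of X on these modules). In other words, the decomposition of a homogeneous polynomial of degree k into monogenic components p = Σ_{i=0}^k X_s^{k−i} m_i with m_i ∈ M_i is unique. -/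
open Finset

section Aux
variable {M : Type*} [AddCommGroup M] [Module ℝ M]

theorem aux_H (X H : Module.End ℝ M) (hHX : H * X - X * H = X)
    (μ : ℝ) (m : M) (hH : H m = μ • m) :
    ∀ p : ℕ, H ((X ^ p) m) = (μ + p) • (X ^ p) m := by
  have hc : H * X = X + X * H := eq_add_of_sub_eq hHX
  intro p
  induction p with
  | zero => simpa using hH
  | succ p ih =>
    have h1 : (X ^ (p + 1)) m = X ((X ^ p) m) := by
      rw [pow_succ']; rfl
    have h2 : H (X ((X ^ p) m)) = X (H ((X ^ p) m)) + X ((X ^ p) m) := by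
      have := congrArg (fun f : Module.End ℝ M => f ((X ^ p) m)) hc
      simpa [Module.End.mul_apply, add_comm] using this
    rw [h1, h2, ih, map_smul]
    push_cast
    module

theorem aux_Y (X Y H : Module.End ℝ M) (hHX : H * X - X * H = X)
    (hYX : Y * X - X * Y = H)
    (μ : ℝ) (m : M) (hH : H m = μ • m) (hm : Y m = 0) :
    ∀ p : ℕ, Y ((X ^ (p + 1)) m) =
      (((p : ℝ) + 1) * μ + ((p : ℝ) + 1) * p / 2) • (X ^ p) m := by
  have hc : Y * X = H + X * Y := eq_add_of_sub_eq hYX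
  have hcapp : ∀ v : M, Y (X v) = X (Y v) + H v := by
    intro v
    have := congrArg (fun f : Module.End ℝ M => f v) hc
    simpa [Module.End.mul_apply, add_comm] using this
  intro p
  induction p with
  | zero => simp [pow_succ', Module.End.mul_apply, hcapp, hm, hH]
  | succ p ih =>
    have h1 : (X ^ (p + 2)) m = X ((X ^ (p + 1)) m) := by
      rw [pow_succ']; rfl
    rw [h1, hcapp, ih, map_smul, aux_H X H hHX μ m hH (p + 1)]
    have h2 : X ((X ^ p) m) = (X ^ (p + 1)) m := by rw [pow_succ']; rfl
    rw [h2]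
    push_cast
    match_scalars
    ring

theorem aux_Ypow (X Y H : Module.End ℝ M) (hHX : H * X - X * H = X)
    (hYX : Y * X - X * Y = H)
    (μ : ℝ) (hμ : 0 < μ) (m : M) (hH : H m = μ • m) (hm : Y m = 0) :
    ∀ p : ℕ, ∃ C : ℝ, 0 < C ∧ (Y ^ p) ((X ^ p) m) = C • m := by
  intro p
  induction p with
  | zero => exact ⟨1, one_pos, by simp⟩
  | succ p ih =>
    obtain ⟨C, hC, hCe⟩ := ih
    refine ⟨(((p : ℝ) + 1) * μ + ((p : ℝ) + 1) * p / 2) * C, ?_, ?_⟩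
    · have h1 : (0:ℝ) < ((p : ℝ) + 1) * μ := by positivity
      have h2 : (0:ℝ) ≤ ((p : ℝ) + 1) * p / 2 := by positivity
      nlinarith
    · have h1 : (Y ^ (p + 1)) ((X ^ (p + 1)) m) = (Y ^ p) (Y ((X ^ (p + 1)) m)) := by
        rw [pow_succ]; rfl
      rw [h1, aux_Y X Y H hHX hYX μ m hH hm p, map_smul, hCe, smul_smul]

theorem aux_kill (X Y H : Module.End ℝ M) (hHX : H * X - X * H = X)
    (hYX : Y * X - X * Y = H)
    (μ : ℝ) (hμ : 0 < μ) (m : M) (hH : H m = μ • m) (hm : Y m = 0)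
    {p q : ℕ} (hpq : q < p) : (Y ^ p) ((X ^ q) m) = 0 := by
  obtain ⟨C, hC, hCe⟩ := aux_Ypow X Y H hHX hYX μ hμ m hH hm q
  have h1 : p = (p - q - 1) + 1 + q := by omega
  calc (Y ^ p) ((X ^ q) m)
      = (Y ^ (p - q - 1)) (Y ((Y ^ q) ((X ^ q) m))) := by
        rw [h1, pow_add, pow_succ]
        simp [Module.End.mul_apply]
    _ = 0 := by rw [hCe, map_smul, hm, smul_zero, map_zero]

end Aux

theorem monogenic_decomposition_unique {M : Type*} [AddCommGroup M] [Module ℝ M]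
    (X Y H : Module.End ℝ M) (n k : ℕ) (hn : 1 ≤ n)
    (hHY : H * Y - Y * H = -Y) (hHX : H * X - X * H = X) (hYX : Y * X - X * Y = H)
    (m : Fin (k + 1) → M)
    (hYm : ∀ i, Y (m i) = 0)
    (hHm : ∀ i : Fin (k + 1), H (m i) = ((i : ℝ) + n) • m i)
    (hsum : ∑ i : Fin (k + 1), (X ^ (k - i.1)) (m i) = 0) :
    ∀ i : Fin (k + 1), (X ^ (k - i.1)) (m i) = 0 ∧ m i = 0 := by
  have hμ : ∀ i : Fin (k + 1), (0:ℝ) < (i : ℝ) + n := by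
    intro i
    have : (1:ℝ) ≤ (n:ℝ) := by exact_mod_cast hn
    have : (0:ℝ) ≤ (i:ℝ) := by positivity
    linarith
  have main : ∀ N : ℕ, ∀ i : Fin (k + 1), i.1 = N → m i = 0 := by
    intro N
    induction N using Nat.strong_induction_on with
    | _ N ih =>
      intro i hi
      -- apply Y^(k - N) to the sum
      have h0 : (Y ^ (k - N)) (∑ j : Fin (k + 1), (X ^ (k - j.1)) (m j)) = 0 := by
        rw [hsum, map_zero]
      rw [map_sum] at h0
      obtain ⟨C, hC, hCe⟩ := aux_Ypow X Y H hHX hYX ((i : ℝ) + n) (hμ i) (m i)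
        (hHm i) (hYm i) (k - N)
      have hsingle : ∑ j : Fin (k + 1), (Y ^ (k - N)) ((X ^ (k - j.1)) (m j))
          = (Y ^ (k - N)) ((X ^ (k - i.1)) (m i)) := by
        refine Finset.sum_eq_single_of_mem i (Finset.mem_univ i) ?_
        intro j _ hji
        rcases lt_trichotomy j.1 i.1 with h | h | h
        · rw [ih j.1 (by omega) j rfl, map_zero, map_zero]
        · exact absurd (Fin.ext h) hji
        · have hj : k - j.1 < k - N := by omega
          exact aux_kill X Y H hHX hYX ((j : ℝ) + n) (hμ j) (m j) (hHm j) (hYm j) hj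
      rw [hsingle, hi, hCe] at h0
      have := smul_eq_zero.mp h0
      rcases this with h | h
      · exact absurd h (ne_of_gt hC)
      · exact h
  intro i
  have hmi : m i = 0 := main i.1 i rfl
  exact ⟨by rw [hmi, map_zero], hmi⟩
end

section
/- Let X, Y, H satisfy [H,Y] = −Y, [H,X] = X, [Y,X] = H with n ≥ 1 a fixed integer, and set Γ = X Y − (1/2)(H − n)(H + n − 1). If v satisfies Y v = 0 and H v = (k + n) v (a symplectic monogenic of degree k), then Γ v = −(1/2) k (2n − 1 + k) v. Moreover, for any j ≥ 0, Γ (X^j v) = −(1/2) k (2n − 1 + k) X^j v; i.e. the Casimir-type operator Γ_s acts on the summand X_s^j M_k of the Fischer decomposition by the scalar −(1/2) k (2n − 1 + k). -/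
/-- with `X, Y, H` satisfying `[H,Y] = −Y`, `[H,X] = X`, `[Y,X] = H`, `n ≥ 1`,
and `Γ = X Y − ½ (H − n)(H + n − 1)` (i.e. `Γ_s = X_s D_s − ½ E (2n − 1 + E)` with
`E = H − n`), if `Y v = 0` and `H v = (k + n) v` then `Γ v = −½ k (2n − 1 + k) v`, and
moreover `Γ (X^j v) = −½ k (2n − 1 + k) X^j v` for all `j ≥ 0`. -/
theorem casimir_eigenvalue_on_monogenic {M : Type*} [AddCommGroup M] [Module ℝ M]
    (X Y H : Module.End ℝ M) (n k : ℕ) (hn : 1 ≤ n)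
    (hHY : H * Y - Y * H = -Y) (hHX : H * X - X * H = X) (hYX : Y * X - X * Y = H)
    (v : M) (hYv : Y v = 0) (hHv : H v = ((k : ℝ) + n) • v) :
    (X * Y - (1 / 2 : ℝ) • ((H - (n : ℝ) • 1) * (H + ((n : ℝ) - 1) • 1))) v
        = (-(1 / 2 : ℝ) * k * (2 * n - 1 + k)) • v
      ∧ ∀ j : ℕ,
        (X * Y - (1 / 2 : ℝ) • ((H - (n : ℝ) • 1) * (H + ((n : ℝ) - 1) • 1))) ((X ^ j) v)
          = (-(1 / 2 : ℝ) * k * (2 * n - 1 + k)) • ((X ^ j) v) := by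
  have hHXp : ∀ w, H (X w) = X (H w) + X w := by
    intro w
    have := LinearMap.ext_iff.mp hHX w
    simp only [LinearMap.sub_apply, Module.End.mul_apply, sub_eq_iff_eq_add] at this
    rw [this]; abel
  have hYXp : ∀ w, Y (X w) = X (Y w) + H w := by
    intro w
    have := LinearMap.ext_iff.mp hYX w
    simp only [LinearMap.sub_apply, Module.End.mul_apply, sub_eq_iff_eq_add] at this
    rw [this]; abel
  set Γ : Module.End ℝ M :=
    X * Y - (1 / 2 : ℝ) • ((H - (n : ℝ) • 1) * (H + ((n : ℝ) - 1) • 1)) with hΓ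
  have comm : ∀ w, Γ (X w) = X (Γ w) := by
    intro w
    simp only [hΓ, LinearMap.sub_apply, Module.End.mul_apply, LinearMap.smul_apply,
      LinearMap.add_apply, Module.End.one_apply, map_add, map_smul, map_sub,
      hHXp, hYXp]
    module
  have base : Γ v = (-(1 / 2 : ℝ) * k * (2 * n - 1 + k)) • v := by
    simp only [hΓ, LinearMap.sub_apply, Module.End.mul_apply, LinearMap.smul_apply,
      LinearMap.add_apply, Module.End.one_apply, map_add, map_smul, map_sub,
      hYv, hHv, map_zero]
    module
  refine ⟨base, ?_⟩
  intro j
  induction j with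
  | zero => simpa using base
  | succ j ih =>
      rw [pow_succ', Module.End.mul_apply, comm, ih, map_smul]
end

section
/- Fix integers k ≥ 0 and 0 ≤ i ≤ k, and n ≥ 1. Define the operator π^k_i = Σ_{j=0}^{k−i} a^{i,k}_j X^{i+j} Y^{i+j}, where a^{i,k}_j = (−1)^j (2n+2k−2i−1) · (2^{i+j}/(i! j!)) · (2n+2k−2i−j−2)!/(2n+2k−i−1)!. Then for every symplectic monogenic m of degree k − p (i.e. Y m = 0, H m = (k−p+n) m) with 0 ≤ p ≤ k, one has π^k_i (X^p m) = δ_{i p} X^i m. -/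
open Finset

private lemma fact_ratio (b r : ℕ) :
    (((b + r).factorial : ℝ)) = (b.factorial : ℝ) * ∏ t ∈ range r, ((b : ℝ) + 1 + t) := by
  induction r with
  | zero => simp
  | succ r ih =>
    rw [prod_range_succ, ← mul_assoc, ← ih, ← Nat.add_assoc, Nat.factorial_succ]
    push_cast
    ring

private lemma alt_sum_zero (q : ℕ) : ∀ x : ℝ,
    ∑ j ∈ range (q + 2), (-1 : ℝ) ^ j * ((q + 1).choose j) * ∏ t ∈ range q, (x - j + t) = 0 := by
  induction q with
  | zero => intro x; simp [Finset.sum_range_succ]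
  | succ q ih =>
    intro x
    have h := Finset.sum_choose_succ_mul
      (fun j _ => (-1 : ℝ) ^ j * ∏ t ∈ range (q + 1), (x - j + t)) (q + 1)
    have e1 : ∑ j ∈ range (q + 1 + 2), (-1 : ℝ) ^ j * ((q + 1 + 1).choose j)
          * ∏ t ∈ range (q + 1), (x - j + t)
        = ∑ j ∈ range (q + 1 + 2), ((q + 1 + 1).choose j : ℝ)
          * ((-1 : ℝ) ^ j * ∏ t ∈ range (q + 1), (x - j + t)) := by
      refine Finset.sum_congr rfl fun j _ => by ring
    rw [e1, h]
    have e2 : ∀ j : ℕ, (∏ t ∈ range (q + 1), (x - (j + 1 : ℕ) + t))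
        = (∏ t ∈ range q, (x - j + t)) * (x - j - 1) := by
      intro j
      rw [Finset.prod_range_succ' (fun t => (x - (j + 1 : ℕ) + t)) q]
      congr 1
      · refine Finset.prod_congr rfl fun t _ => by push_cast; ring
      · push_cast; ring
    have e3 : ∀ j : ℕ, (∏ t ∈ range (q + 1), (x - j + t))
        = (∏ t ∈ range q, (x - j + t)) * (x - j + q) := by
      intro j
      rw [Finset.prod_range_succ]
    have e4 : ∑ j ∈ range (q + 2), ((q + 1).choose j : ℝ)
            * ((-1 : ℝ) ^ j * ∏ t ∈ range (q + 1), (x - j + t))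
          + ∑ j ∈ range (q + 2), ((q + 1).choose j : ℝ)
            * ((-1 : ℝ) ^ (j + 1) * ∏ t ∈ range (q + 1), (x - (j + 1 : ℕ) + t))
        = (q + 1) * ∑ j ∈ range (q + 2), (-1 : ℝ) ^ j * ((q + 1).choose j)
            * ∏ t ∈ range q, (x - j + t) := by
      rw [Finset.mul_sum, ← Finset.sum_add_distrib]
      refine Finset.sum_congr rfl fun j _ => ?_
      rw [e2 j, e3 j]
      push_cast
      ring
    rw [e4, ih x, mul_zero]

private lemma endA {M : Type*} [AddCommGroup M] [Module ℝ M]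
    (X H : Module.End ℝ M) (hHX' : H * X = X * H + X)
    (m : M) (δ : ℝ) (hHm : H m = δ • m) :
    ∀ t : ℕ, H ((X ^ t) m) = (δ + t) • (X ^ t) m := by
  intro t
  induction t with
  | zero => simpa using hHm
  | succ t ih =>
    have h1 : (X ^ (t + 1)) m = X ((X ^ t) m) := by
      rw [pow_succ', Module.End.mul_apply]
    have h2 : H (X ((X ^ t) m)) = (H * X) ((X ^ t) m) := rfl
    rw [h1, h2, hHX', LinearMap.add_apply, Module.End.mul_apply, ih, map_smul,
      ← Module.End.mul_apply X, ← pow_succ']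
    push_cast
    module

private lemma endB {M : Type*} [AddCommGroup M] [Module ℝ M]
    (X Y H : Module.End ℝ M) (hHX' : H * X = X * H + X) (hYX' : Y * X = X * Y + H)
    (m : M) (δ : ℝ) (hYm : Y m = 0) (hHm : H m = δ • m) :
    ∀ t : ℕ, Y ((X ^ t) m)
      = ((t : ℝ) * δ + (t : ℝ) * ((t : ℝ) - 1) / 2) • (X ^ (t - 1)) m := by
  intro t
  induction t with
  | zero => simp [hYm]
  | succ t ih =>
    have h1 : (X ^ (t + 1)) m = X ((X ^ t) m) := by
      rw [pow_succ', Module.End.mul_apply]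
    have h2 : Y (X ((X ^ t) m)) = (Y * X) ((X ^ t) m) := rfl
    rw [h1, h2, hYX', LinearMap.add_apply, Module.End.mul_apply, ih,
      endA X H hHX' m δ hHm t, map_smul]
    cases t with
    | zero => simp
    | succ s =>
      rw [Nat.succ_sub_one, Nat.succ_sub_one, ← Module.End.mul_apply X, ← pow_succ']
      rw [← add_smul]
      congr 1
      push_cast
      ring

private lemma endC {M : Type*} [AddCommGroup M] [Module ℝ M]
    (X Y H : Module.End ℝ M) (hHX' : H * X = X * H + X) (hYX' : Y * X = X * Y + H)
    (m : M) (δ : ℝ) (hYm : Y m = 0) (hHm : H m = δ • m) (p : ℕ) :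
    ∀ s : ℕ, (Y ^ s) ((X ^ p) m)
      = (∏ t ∈ range s,
          (((p - t : ℕ) : ℝ) * δ + ((p - t : ℕ) : ℝ) * (((p - t : ℕ) : ℝ) - 1) / 2))
        • (X ^ (p - s)) m := by
  intro s
  induction s with
  | zero => simp
  | succ s ih =>
    have h1 : (Y ^ (s + 1)) ((X ^ p) m) = Y ((Y ^ s) ((X ^ p) m)) := by
      rw [pow_succ', Module.End.mul_apply]
    rw [h1, ih, map_smul, endB X Y H hHX' hYX' m δ hYm hHm (p - s), smul_smul,
      prod_range_succ, Nat.sub_sub, mul_comm]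

/-- with `X = X_s`, `Y = D_s`, `H = E + n` satisfying `[H,Y] = −Y`, `[H,X] = X`,
`[Y,X] = H`, `n ≥ 1`, and `0 ≤ i ≤ k`, the projection operator
`π^k_i = Σ_{j=0}^{k−i} a^{i,k}_j X^{i+j} Y^{i+j}` with
`a^{i,k}_j = (−1)^j (2n+2k−2i−1) · 2^{i+j}/(i! j!) · (2n+2k−2i−j−2)!/(2n+2k−i−1)!`
satisfies `π^k_i (X^p m) = δ_{ip} X^i m` for every symplectic monogenic `m` of degree
`k − p` (`Y m = 0`, `H m = (k−p+n) m`), `0 ≤ p ≤ k`. -/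
theorem fischer_projection {M : Type*} [AddCommGroup M] [Module ℝ M]
    (X Y H : Module.End ℝ M) (n k i : ℕ) (hn : 1 ≤ n) (hik : i ≤ k)
    (hHY : H * Y - Y * H = -Y) (hHX : H * X - X * H = X) (hYX : Y * X - X * Y = H) :
    ∀ p ≤ k, ∀ m : M, Y m = 0 → H m = (((k - p : ℕ) : ℝ) + n) • m →
      ∑ j ∈ range (k - i + 1),
          ((-1 : ℝ) ^ j * (2 * (n : ℝ) + 2 * k - 2 * i - 1) * 2 ^ (i + j)
              / (i.factorial * j.factorial)
              * ((2 * n + 2 * k - 2 * i - j - 2).factorial : ℝ)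
              / ((2 * n + 2 * k - i - 1).factorial : ℝ))
            • ((X ^ (i + j) * Y ^ (i + j)) ((X ^ p) m))
        = if i = p then (X ^ i) m else 0 := by
  intro p hpk m hYm hHm
  have hHX' : H * X = X * H + X := by
    have := hHX; rw [sub_eq_iff_eq_add] at this; rw [this, add_comm]
  have hYX' : Y * X = X * Y + H := by
    have := hYX; rw [sub_eq_iff_eq_add] at this; rw [this, add_comm]
  set δ : ℝ := ((k - p : ℕ) : ℝ) + n with hδ
  have hC := endC X Y H hHX' hYX' m δ hYm hHm p
  by_cases hpi : p < i
  · rw [if_neg (by omega)]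
    apply Finset.sum_eq_zero
    intro j hj
    have hzero : (∏ t ∈ range (i + j),
        (((p - t : ℕ) : ℝ) * δ + ((p - t : ℕ) : ℝ) * (((p - t : ℕ) : ℝ) - 1) / 2)) = 0 := by
      refine Finset.prod_eq_zero (Finset.mem_range.2 (by omega : p < i + j)) ?_
      have : p - p = 0 := by omega
      simp [this]
    rw [Module.End.mul_apply, hC (i + j), hzero, zero_smul, map_zero, smul_zero]
  · push_neg at hpi
    obtain ⟨q, rfl⟩ : ∃ q, p = i + q := ⟨p - i, by omega⟩
    obtain ⟨b, rfl⟩ : ∃ b, n = b + 1 := ⟨n - 1, by omega⟩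
    obtain ⟨r, rfl⟩ : ∃ r, k = i + q + r := ⟨k - (i + q), by omega⟩
    have hδval : δ = (r : ℝ) + (b : ℝ) + 1 := by
      rw [hδ]
      have h9 : i + q + r - (i + q) = r := by omega
      rw [h9]; push_cast; ring
    -- closed form for the product of μ's
    have hcform : ∀ s, s ≤ i + q → (∏ t ∈ range s,
          (((i + q - t : ℕ) : ℝ) * δ
            + ((i + q - t : ℕ) : ℝ) * (((i + q - t : ℕ) : ℝ) - 1) / 2))
        = ((i + q).descFactorial s : ℝ)
          * ((2 * b + q + 2 * r + i + 1).descFactorial s : ℝ) / 2 ^ s := by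
      intro s
      induction s with
      | zero => intro _; simp
      | succ s ihs =>
        intro hs
        rw [prod_range_succ, ihs (by omega), Nat.descFactorial_succ, Nat.descFactorial_succ]
        have h1 : ((i + q - s : ℕ) : ℝ) = (i : ℝ) + q - s := by
          rw [Nat.cast_sub (by omega)]; push_cast; ring
        have h2 : ((2 * b + q + 2 * r + i + 1 - s : ℕ) : ℝ)
            = 2 * (b : ℝ) + q + 2 * r + i + 1 - s := by
          rw [Nat.cast_sub (by omega)]; push_cast; ring
        rw [hδval]
        push_cast [h1, h2]
        ring
    -- normalize the ℕ-subtraction constants in the goal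
    have e5 : ∀ j : ℕ, 2 * (b + 1) + 2 * (i + q + r) - 2 * i - j - 2
        = 2 * b + 2 * q + 2 * r - j := fun j => by omega
    have e6 : 2 * (b + 1) + 2 * (i + q + r) - i - 1 = 2 * b + 2 * q + 2 * r + i + 1 := by
      omega
    have hki : i + q + r - i = q + r := by omega
    simp only [e5, e6, hki]
    -- restrict the sum to range (q+1)
    have hsub : range (q + 1) ⊆ range (q + r + 1) := by
      intro x hx; simp only [mem_range] at hx ⊢; omega
    rw [← Finset.sum_subset hsub ?hvan]
    case hvan =>
      intro j hj1 hj2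
      simp only [mem_range] at hj1 hj2
      have hzero : (∏ t ∈ range (i + j),
          (((i + q - t : ℕ) : ℝ) * δ
            + ((i + q - t : ℕ) : ℝ) * (((i + q - t : ℕ) : ℝ) - 1) / 2)) = 0 := by
        refine Finset.prod_eq_zero (Finset.mem_range.2 (by omega : i + q < i + j)) ?_
        have : i + q - (i + q) = 0 := by omega
        simp [this]
      rw [Module.End.mul_apply, hC (i + j), hzero, zero_smul, map_zero, smul_zero]
    -- rewrite each remaining term
    have hterm : ∀ j ∈ range (q + 1),
        ((-1 : ℝ) ^ j * (2 * ((b + 1 : ℕ) : ℝ) + 2 * ((i + q + r : ℕ) : ℝ) - 2 * (i : ℝ) - 1)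
              * 2 ^ (i + j) / (i.factorial * j.factorial)
              * ((2 * b + 2 * q + 2 * r - j).factorial : ℝ)
              / ((2 * b + 2 * q + 2 * r + i + 1).factorial : ℝ))
            • ((X ^ (i + j) * Y ^ (i + j)) ((X ^ (i + q)) m))
        = (((-1 : ℝ) ^ j * (2 * ((b + 1 : ℕ) : ℝ) + 2 * ((i + q + r : ℕ) : ℝ) - 2 * (i : ℝ) - 1)
              * 2 ^ (i + j) / (i.factorial * j.factorial)
              * ((2 * b + 2 * q + 2 * r - j).factorial : ℝ)
              / ((2 * b + 2 * q + 2 * r + i + 1).factorial : ℝ))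
            * (((i + q).descFactorial (i + j) : ℝ)
              * ((2 * b + q + 2 * r + i + 1).descFactorial (i + j) : ℝ) / 2 ^ (i + j)))
            • (X ^ (i + q)) m := by
      intro j hj
      have hj' : j ≤ q := by simpa [Nat.lt_succ_iff] using hj
      rw [Module.End.mul_apply, hC (i + j), hcform (i + j) (by omega), map_smul,
        ← Module.End.mul_apply (X ^ (i + j)) (X ^ (i + q - (i + j))) m, ← pow_add,
        show i + j + (i + q - (i + j)) = i + q from by omega, smul_smul]
    rw [Finset.sum_congr rfl hterm, ← Finset.sum_smul]
    have fact_ne : ∀ t : ℕ, ((t.factorial : ℝ)) ≠ 0 :=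
      fun t => Nat.cast_ne_zero.2 (Nat.factorial_ne_zero t)
    rcases Nat.eq_zero_or_pos q with rfl | hq
    · -- q = 0 : projector case, single term equal to 1
      rw [if_pos (by omega : i = i + 0), Finset.sum_range_one]
      simp only [Nat.add_zero, Nat.mul_zero, Nat.sub_zero, pow_zero, one_mul,
        Nat.factorial_zero, Nat.cast_one, mul_one]
      have d2 : (2*b + 2*r + 1).factorial * ((2*b + 2*r + i + 1).descFactorial i)
          = (2*b + 2*r + i + 1).factorial := by
        have h := Nat.factorial_mul_descFactorial (show i ≤ 2*b + 2*r + i + 1 by omega)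
        rwa [show 2*b + 2*r + i + 1 - i = 2*b + 2*r + 1 from by omega] at h
      have d2r : (((2*b + 2*r + i + 1).descFactorial i : ℕ) : ℝ)
          = ((2*b + 2*r + i + 1).factorial : ℝ) / ((2*b + 2*r + 1).factorial : ℝ) := by
        rw [eq_div_iff (fact_ne _), mul_comm]
        exact_mod_cast congrArg (Nat.cast (R := ℝ)) d2
      convert one_smul ℝ ((X ^ i) m) using 2
      rw [d2r, Nat.descFactorial_self, Nat.factorial_succ (2*b + 2*r)]
      have hpos : ((2*b + 2*r).factorial : ℝ) ≠ 0 := fact_ne _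
      have h2i : (2 : ℝ) ^ i ≠ 0 := by positivity
      push_cast
      field_simp
      ring
    · -- q ≥ 1 : the sum vanishes
      obtain ⟨Q, rfl⟩ : ∃ Q, q = Q + 1 := ⟨q - 1, by omega⟩
      rw [if_neg (by omega)]
      rw [show Q + 1 + 1 = Q + 2 from by omega]
      have key : ∀ j ∈ range (Q + 2),
          ((-1 : ℝ) ^ j * (2 * ((b + 1 : ℕ) : ℝ) + 2 * ((i + (Q+1) + r : ℕ) : ℝ) - 2 * (i : ℝ) - 1)
              * 2 ^ (i + j) / (i.factorial * j.factorial)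
              * ((2 * b + 2 * (Q+1) + 2 * r - j).factorial : ℝ)
              / ((2 * b + 2 * (Q+1) + 2 * r + i + 1).factorial : ℝ))
            * (((i + (Q+1)).descFactorial (i + j) : ℝ)
              * ((2 * b + (Q+1) + 2 * r + i + 1).descFactorial (i + j) : ℝ) / 2 ^ (i + j))
          = ((2*(b:ℝ) + 2*Q + 2*r + 3) * ((i + (Q+1)).factorial : ℝ)
                * ((2*b + (Q+1) + 2*r + i + 1).factorial : ℝ)
              / ((i.factorial : ℝ) * ((2*b + 2*(Q+1) + 2*r + i + 1).factorial : ℝ)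
                * ((Q+1).factorial : ℝ)))
            * ((-1 : ℝ) ^ j * (((Q+1).choose j : ℕ) : ℝ)
              * ∏ t ∈ range Q, (2*(b:ℝ) + 2*(r:ℝ) + (Q:ℝ) + 3 - (j:ℝ) + (t:ℝ))) := by
        intro j hj
        have hj' : j ≤ Q + 1 := by simpa [Nat.lt_succ_iff] using hj
        obtain ⟨u, hu⟩ : ∃ u, Q + 1 = j + u := ⟨Q + 1 - j, by omega⟩
        have f2 : u.factorial * ((i + (Q+1)).descFactorial (i + j))
            = (i + (Q+1)).factorial := by
          have h := Nat.factorial_mul_descFactorial (show i + j ≤ i + (Q+1) by omega)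
          rwa [show i + (Q+1) - (i + j) = u from by omega] at h
        have f3 : (2*b + 2*r + 1 + u).factorial
              * ((2*b + (Q+1) + 2*r + i + 1).descFactorial (i + j))
            = (2*b + (Q+1) + 2*r + i + 1).factorial := by
          have h := Nat.factorial_mul_descFactorial
            (show i + j ≤ 2*b + (Q+1) + 2*r + i + 1 by omega)
          rwa [show 2*b + (Q+1) + 2*r + i + 1 - (i + j) = 2*b + 2*r + 1 + u from by omega] at h
        have f5 : ((Q+1).choose j) * (j.factorial * u.factorial) = (Q+1).factorial := by
          have h := Nat.choose_mul_factorial_mul_factorial hj'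
          rw [show Q + 1 - j = u from by omega] at h
          rw [← h]; ring
        have f2r : (((i + (Q+1)).descFactorial (i + j) : ℕ) : ℝ)
            = ((i + (Q+1)).factorial : ℝ) / (u.factorial : ℝ) := by
          rw [eq_div_iff (fact_ne u), mul_comm]
          exact_mod_cast congrArg (Nat.cast (R := ℝ)) f2
        have f3r : (((2*b + (Q+1) + 2*r + i + 1).descFactorial (i + j) : ℕ) : ℝ)
            = ((2*b + (Q+1) + 2*r + i + 1).factorial : ℝ)
              / ((2*b + 2*r + 1 + u).factorial : ℝ) := by
          rw [eq_div_iff (fact_ne _), mul_comm]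
          exact_mod_cast congrArg (Nat.cast (R := ℝ)) f3
        have f5r : ((((Q+1).choose j : ℕ)) : ℝ)
            = (((Q+1).factorial : ℕ) : ℝ) / ((j.factorial : ℝ) * (u.factorial : ℝ)) := by
          rw [eq_div_iff (mul_ne_zero (fact_ne j) (fact_ne u))]
          exact_mod_cast congrArg (Nat.cast (R := ℝ)) f5
        have f4 : ((2*b + 2*(Q+1) + 2*r - j).factorial : ℝ)
            = ((2*b + 2*r + 1 + u).factorial : ℝ)
              * ∏ t ∈ range Q, (2*(b:ℝ) + 2*(r:ℝ) + (Q:ℝ) + 3 - (j:ℝ) + (t:ℝ)) := by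
          rw [show 2*b + 2*(Q+1) + 2*r - j = (2*b + 2*r + 1 + u) + Q from by omega]
          rw [fact_ratio (2*b + 2*r + 1 + u) Q]
          congr 1
          refine Finset.prod_congr rfl fun t _ => ?_
          have hu' : (u : ℝ) = (Q : ℝ) + 1 - (j : ℝ) := by
            have h9 : ((Q : ℝ) + 1) = (j : ℝ) + (u : ℝ) := by exact_mod_cast hu
            linarith
          push_cast
          rw [hu']
          ring
        rw [f2r, f3r, f4, f5r]
        have h2ij : (2 : ℝ) ^ (i + j) ≠ 0 := by positivity
        push_cast
        field_simp
        ring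
      rw [Finset.sum_congr rfl key, ← Finset.mul_sum,
        alt_sum_zero Q (2*(b:ℝ) + 2*(r:ℝ) + (Q:ℝ) + 3), mul_zero, zero_smul]
end

section
/- With the coefficients a^{i,k}_j defined by the recursion a^{i,k}_0 = (2^i/i!) · (2n+2k−2i−1)!/(2n+2k−i−1)! and Σ_{j=0}^{l+1} a^{i,k}_j · c_{i+j, i+l+1, k−i−l−1} = 0 for 0 ≤ l ≤ k−i−1 (where c_{j,k,ℓ} = (1/2^j)(k!/(k−j)!)((2n+2ℓ+k−1)!/(2n+2ℓ+k−j−1)!)), one has the closed form a^{i,k}_j = (−1)^j (2^j/j!) · (2n+2k−2i−j−2)!/(2n+2k−2i−2)! · a^{i,k}_0 for 0 ≤ j ≤ k−i. -/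
open Finset

/-- The coefficient `c_{j,k,ℓ} = (1/2^j) (k!/(k−j)!) ((2n+2ℓ+k−1)!/(2n+2ℓ+k−j−1)!)` from
`D_s^j (X_s^k m_ℓ) = c_{j,k,ℓ} X_s^{k−j} m_ℓ`. -/
noncomputable def sympC (n j k ℓ : ℕ) : ℝ :=
  (1 / 2 ^ j) * ((k.factorial : ℝ) / ((k - j).factorial : ℝ))
    * (((2 * n + 2 * ℓ + k - 1).factorial : ℝ) / ((2 * n + 2 * ℓ + k - j - 1).factorial : ℝ))

lemma aux_rearrange (f : ℕ → ℝ) (m : ℕ) :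
    ∑ j ∈ range (m + 2), (-1:ℝ)^j * ((m+1).choose j) * f j
      = ∑ j ∈ range (m + 1), (-1:ℝ)^j * (m.choose j) * (f j - f (j+1)) := by
  have hL : ∑ j ∈ range (m + 2), (-1:ℝ)^j * ((m+1).choose j) * f j
      = ∑ j ∈ range (m + 1), (-1:ℝ)^(j+1) * ((m+1).choose (j+1)) * f (j+1) + f 0 := by
    rw [Finset.sum_range_succ' _ (m+1)]; simp
  have hsplit : ∑ j ∈ range (m + 1), (-1:ℝ)^(j+1) * ((m+1).choose (j+1)) * f (j+1)
      = -(∑ j ∈ range (m+1), (-1:ℝ)^j * (m.choose j) * f (j+1))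
        - ∑ j ∈ range (m+1), (-1:ℝ)^j * (m.choose (j+1)) * f (j+1) := by
    rw [← Finset.sum_neg_distrib, ← Finset.sum_sub_distrib]
    refine Finset.sum_congr rfl fun j _ => ?_
    have : ((m+1).choose (j+1) : ℝ) = (m.choose j : ℝ) + (m.choose (j+1) : ℝ) := by
      exact_mod_cast congrArg (Nat.cast (R := ℝ)) (Nat.choose_succ_succ m j)
    rw [this]; ring
  have hT : ∑ j ∈ range (m+1), (-1:ℝ)^j * (m.choose (j+1)) * f (j+1)
      = f 0 - ∑ j ∈ range (m+1), (-1:ℝ)^j * (m.choose j) * f j := by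
    have h1 : ∑ j ∈ range (m+1), (-1:ℝ)^j * (m.choose (j+1)) * f (j+1)
        = ∑ j ∈ range m, (-1:ℝ)^j * (m.choose (j+1)) * f (j+1) := by
      rw [Finset.sum_range_succ]; simp
    have h2 : ∑ j ∈ range (m+1), (-1:ℝ)^j * (m.choose j) * f j
        = ∑ j ∈ range m, (-1:ℝ)^(j+1) * (m.choose (j+1)) * f (j+1) + f 0 := by
      rw [Finset.sum_range_succ' _ m]; simp
    have h3 : ∑ j ∈ range m, (-1:ℝ)^(j+1) * (m.choose (j+1)) * f (j+1)
        = -∑ j ∈ range m, (-1:ℝ)^j * (m.choose (j+1)) * f (j+1) := by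
      rw [← Finset.sum_neg_distrib]
      refine Finset.sum_congr rfl fun j _ => ?_; ring
    rw [h1, h2, h3]; ring
  rw [hL, hsplit, hT]
  have : ∑ j ∈ range (m+1), (-1:ℝ)^j * (m.choose j) * (f j - f (j+1))
      = ∑ j ∈ range (m+1), ((-1:ℝ)^j * (m.choose j) * f j - (-1:ℝ)^j * (m.choose j) * f (j+1)) := by
    refine Finset.sum_congr rfl fun j _ => ?_; ring
  rw [this, Finset.sum_sub_distrib]
  ring

lemma altsum_desc : ∀ l α : ℕ, 2*l+1 ≤ α →
    ∑ j ∈ range (l+2), (-1:ℝ)^j * ((l+1).choose j) * ((α - j).descFactorial l : ℝ) = 0 := by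
  intro l
  induction l with
  | zero =>
    intro α hα
    simp [Finset.sum_range_succ]
  | succ l ih =>
    intro α hα
    rw [show l+1+2 = (l+1)+2 from rfl, aux_rearrange (fun j => ((α - j).descFactorial (l+1) : ℝ)) (l+1)]
    have key : ∀ j ∈ range (l+2),
        (-1:ℝ)^j * ((l+1).choose j) *
          (((α - j).descFactorial (l+1) : ℝ) - ((α - (j+1)).descFactorial (l+1) : ℝ))
        = ((l:ℝ)+1) * ((-1:ℝ)^j * ((l+1).choose j) * (((α-1) - j).descFactorial l : ℝ)) := by
      intro j hj
      rw [Finset.mem_range] at hj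
      have hj' : j ≤ l + 1 := by omega
      set x := α - j - 1 with hx
      have hx1 : α - j = x + 1 := by omega
      have hx2 : α - (j+1) = x := by omega
      have hx3 : (α - 1) - j = x := by omega
      have hxl : l ≤ x := by omega
      rw [hx1, hx2, hx3, Nat.succ_descFactorial_succ, Nat.descFactorial_succ]
      have : ((x - l : ℕ) : ℝ) = (x : ℝ) - l := by
        push_cast [Nat.cast_sub hxl]; ring
      push_cast [this]
      ring
    rw [Finset.sum_congr rfl key, ← Finset.mul_sum, ih (α-1) (by omega), mul_zero]


lemma sympC_pos (n j k ℓ : ℕ) : 0 < sympC n j k ℓ := by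
  unfold sympC
  have h1 : (0:ℝ) < ((k - j).factorial : ℝ) := by exact_mod_cast (k-j).factorial_pos
  have h2 : (0:ℝ) < (k.factorial : ℝ) := by exact_mod_cast k.factorial_pos
  have h3 : (0:ℝ) < ((2*n+2*ℓ+k-1).factorial : ℝ) := by exact_mod_cast (2*n+2*ℓ+k-1).factorial_pos
  have h4 : (0:ℝ) < ((2*n+2*ℓ+k-j-1).factorial : ℝ) := by exact_mod_cast (2*n+2*ℓ+k-j-1).factorial_pos
  positivity

lemma keyB (n k i l : ℕ) (hn : 1 ≤ n) (hl : l + 1 ≤ k - i) :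
    ∑ j ∈ range (l+2),
      ((-1:ℝ)^j * (2^j / (j.factorial : ℝ)) *
        (((2*n+2*k-2*i-j-2).factorial : ℝ) / ((2*n+2*k-2*i-2).factorial : ℝ)))
      * sympC n (i+j) (i+l+1) (k-i-l-1) = 0 := by
  have hik : i ≤ k := by omega
  set α := 2*n+2*k-2*i-2 with hα
  set β := 2*n+2*k-i-l-2 with hβ
  set K : ℝ := (1/2^i) * ((i+l+1).factorial : ℝ) * ((β).factorial : ℝ)
      / (((α).factorial : ℝ) * (((l+1)).factorial : ℝ)) with hK
  have key : ∀ j ∈ range (l+2),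
      ((-1:ℝ)^j * (2^j / (j.factorial : ℝ)) *
        (((2*n+2*k-2*i-j-2).factorial : ℝ) / ((α).factorial : ℝ)))
      * sympC n (i+j) (i+l+1) (k-i-l-1)
      = ((-1:ℝ)^j * (((l+1).choose j : ℕ) : ℝ) * (((α - j).descFactorial l : ℕ) : ℝ)) * K := by
    intro j hj
    rw [Finset.mem_range] at hj
    have hj' : j ≤ l + 1 := by omega
    unfold sympC
    have e1 : i + l + 1 - (i + j) = l + 1 - j := by omega
    have e2 : 2*n + 2*(k-i-l-1) + (i+l+1) - 1 = β := by omega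
    have e3 : 2*n + 2*(k-i-l-1) + (i+l+1) - (i+j) - 1 = α - j - l := by omega
    have e4 : 2*n+2*k-2*i-j-2 = α - j := by omega
    rw [e1, e2, e3, e4]
    have hA : ((α - j).factorial : ℝ)
        = ((α - j - l).factorial : ℝ) * (((α - j).descFactorial l : ℕ) : ℝ) := by
      exact_mod_cast congrArg (Nat.cast (R := ℝ)) (Nat.factorial_mul_descFactorial (by omega)).symm
    have hB : (((l+1).factorial : ℕ) : ℝ)
        = (((l+1).choose j : ℕ) : ℝ) * (j.factorial : ℝ) * (((l+1-j).factorial : ℕ) : ℝ) := by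
      exact_mod_cast congrArg (Nat.cast (R := ℝ)) (Nat.choose_mul_factorial_mul_factorial hj').symm
    have hp : (2:ℝ)^(i+j) = 2^i * 2^j := pow_add 2 i j
    have n1 : ((α).factorial : ℝ) ≠ 0 := by exact_mod_cast (α).factorial_ne_zero
    have n2 : (j.factorial : ℝ) ≠ 0 := by exact_mod_cast j.factorial_ne_zero
    have n3 : ((l+1-j).factorial : ℝ) ≠ 0 := by exact_mod_cast (l+1-j).factorial_ne_zero
    have n4 : ((α-j-l).factorial : ℝ) ≠ 0 := by exact_mod_cast (α-j-l).factorial_ne_zero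
    have n5 : (2:ℝ)^i ≠ 0 := by positivity
    have n6 : (2:ℝ)^j ≠ 0 := by positivity
    have n7 : (((l+1)).factorial : ℝ) ≠ 0 := by exact_mod_cast (l+1).factorial_ne_zero
    rw [hK, hA, hp]
    field_simp
    rw [hB]
    ring
  rw [Finset.sum_congr rfl key, ← Finset.sum_mul]
  rw [altsum_desc l α (by omega), zero_mul]

/-- the coefficients `a^{i,k}_j` determined by
`a^{i,k}_0 = (2^i/i!) (2n+2k−2i−1)!/(2n+2k−i−1)!` and the recursion
`Σ_{j=0}^{l+1} a^{i,k}_j c_{i+j, i+l+1, k−i−l−1} = 0` (for `0 ≤ l ≤ k−i−1`) are given in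
closed form by `a^{i,k}_j = (−1)^j (2^j/j!) (2n+2k−2i−j−2)!/(2n+2k−2i−2)! · a^{i,k}_0`
for `0 ≤ j ≤ k−i`. -/
theorem fischer_coefficients_closed_form (n k i : ℕ) (hn : 1 ≤ n) (hik : i ≤ k)
    (a : ℕ → ℝ)
    (ha0 : a 0 = (2 ^ i / (i.factorial : ℝ))
      * (((2 * n + 2 * k - 2 * i - 1).factorial : ℝ) / ((2 * n + 2 * k - i - 1).factorial : ℝ)))
    (hrec : ∀ l : ℕ, l + 1 ≤ k - i →
      ∑ j ∈ range (l + 2), a j * sympC n (i + j) (i + l + 1) (k - i - l - 1) = 0) :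
    ∀ j ≤ k - i,
      a j = (-1) ^ j * (2 ^ j / (j.factorial : ℝ))
        * (((2 * n + 2 * k - 2 * i - j - 2).factorial : ℝ)
            / ((2 * n + 2 * k - 2 * i - 2).factorial : ℝ)) * a 0 := by
  intro j
  induction j using Nat.strong_induction_on with
  | _ j ih =>
    intro hj
    match j with
    | 0 =>
      have h0 : ((2 * n + 2 * k - 2 * i - 2).factorial : ℝ) ≠ 0 := by
        exact_mod_cast (2 * n + 2 * k - 2 * i - 2).factorial_ne_zero
      simp [h0]
    | l + 1 =>
      have hl : l + 1 ≤ k - i := hj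
      have hrecl := hrec l hl
      rw [Finset.sum_range_succ] at hrecl
      have hB := keyB n k i l hn hl
      rw [Finset.sum_range_succ] at hB
      have hsum : ∑ j ∈ range (l+1), a j * sympC n (i+j) (i+l+1) (k-i-l-1)
          = ∑ j ∈ range (l+1),
            (((-1:ℝ)^j * (2^j / (j.factorial : ℝ)) *
              (((2*n+2*k-2*i-j-2).factorial : ℝ) / ((2*n+2*k-2*i-2).factorial : ℝ)))
              * sympC n (i+j) (i+l+1) (k-i-l-1)) * a 0 := by
        refine Finset.sum_congr rfl fun j hjm => ?_
        rw [Finset.mem_range] at hjm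
        rw [ih j (by omega) (by omega)]
        ring
      rw [hsum, ← Finset.sum_mul] at hrecl
      have hc : sympC n (i+(l+1)) (i+l+1) (k-i-l-1) ≠ 0 := ne_of_gt (sympC_pos _ _ _ _)
      have hfromB : ∑ j ∈ range (l+1),
            ((-1:ℝ)^j * (2^j / (j.factorial : ℝ)) *
              (((2*n+2*k-2*i-j-2).factorial : ℝ) / ((2*n+2*k-2*i-2).factorial : ℝ)))
              * sympC n (i+j) (i+l+1) (k-i-l-1)
          = -(((-1:ℝ)^(l+1) * (2^(l+1) / (((l+1)).factorial : ℝ)) *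
              (((2*n+2*k-2*i-(l+1)-2).factorial : ℝ) / ((2*n+2*k-2*i-2).factorial : ℝ)))
              * sympC n (i+(l+1)) (i+l+1) (k-i-l-1)) := by
        linarith [hB]
      rw [hfromB] at hrecl
      apply mul_right_cancel₀ hc
      linear_combination hrecl
end

section
/- Let X, Y, H satisfy [H,Y] = −Y, [H,X] = X, [Y,X] = H with n ≥ 1, and fix k ≥ 0. Define M^{(p)} as subspaces of a module of vectors of the form X^p m where Y m = 0 and H m = (k−p+n) m, for p = 0,...,k. For 0 ≤ i ≤ k, define the Casimir projection ℙ^k_i = Π_{j=0, j≠i}^{k} (2Γ + j(2n−1+j)) / (j(2n−1+j) − i(2n−1+i)), where Γ = X Y − (1/2)(H−n)(H+n−1). Then ℙ^k_i (X^{k−p} m) = δ_{ip} X^{k−i} m for every monogenic m of degree p ≤ k. -/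
open Finset Polynomial

lemma prod_linear_apply {M : Type*} [AddCommGroup M] [Module ℝ M]
    (G : Module.End ℝ M) (v : M) (lam : ℝ) (hv : G v = lam • v)
    (S : Finset ℕ) (c d : ℕ → ℝ) :
    (Polynomial.aeval G (∏ j ∈ S, Polynomial.C (c j) *
        (Polynomial.C 2 * Polynomial.X + Polynomial.C (d j)))) v
      = (∏ j ∈ S, c j * (2 * lam + d j)) • v := by
  classical
  induction S using Finset.induction_on with
  | empty => simp
  | insert a s hnotmem ih =>
    rw [Finset.prod_insert hnotmem, Finset.prod_insert hnotmem, map_mul,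
      Module.End.mul_apply, ih, map_smul, map_mul, map_add, map_mul, aeval_C, aeval_C,
      aeval_C, aeval_X]
    simp only [Module.End.mul_apply, LinearMap.add_apply, Module.algebraMap_end_apply, hv,
      smul_smul, smul_add]
    rw [← add_smul]
    congr 1
    ring


/-- with `X, Y, H` satisfying `[H,Y] = −Y`, `[H,X] = X`, `[Y,X] = H`, `n ≥ 1`,
`Γ = X Y − ½ (H − n)(H + n − 1)` (the Casimir `Γ_s = X_s D_s − ½ E (2n−1+E)`, `E = H − n`),
and `0 ≤ i ≤ k`, the Casimir projection
`ℙ^k_i = Π_{j=0, j≠i}^{k} (2Γ + j(2n−1+j)) / (j(2n−1+j) − i(2n−1+i))`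
satisfies `ℙ^k_i (X^{k−p} m) = δ_{ip} X^{k−i} m` for every symplectic monogenic `m` of
degree `p ≤ k` (`Y m = 0`, `H m = (p + n) m`). -/
theorem casimir_projection {M : Type*} [AddCommGroup M] [Module ℝ M]
    (X Y H : Module.End ℝ M) (n k i : ℕ) (hn : 1 ≤ n) (hik : i ≤ k)
    (hHY : H * Y - Y * H = -Y) (hHX : H * X - X * H = X) (hYX : Y * X - X * Y = H) :
    ∀ p ≤ k, ∀ m : M, Y m = 0 → H m = (((p : ℝ) + n) • m) →
      (Polynomial.aeval
          (X * Y - (1 / 2 : ℝ) • ((H - (n : ℝ) • 1) * (H + ((n : ℝ) - 1) • 1)))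
          (∏ j ∈ (range (k + 1)).erase i,
            Polynomial.C (((j : ℝ) * (2 * n - 1 + j) - (i : ℝ) * (2 * n - 1 + i))⁻¹)
              * (Polynomial.C 2 * Polynomial.X
                  + Polynomial.C ((j : ℝ) * (2 * n - 1 + j)))))
        ((X ^ (k - p)) m)
      = if i = p then (X ^ (k - i)) m else 0 := by
  intro p hpk m hYm hHm
  set G : Module.End ℝ M :=
    X * Y - (1 / 2 : ℝ) • ((H - (n : ℝ) • 1) * (H + ((n : ℝ) - 1) • 1)) with hG
  -- G commutes with X
  have hGX : G * X = X * G := by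
    have h1 : H * X = X * H + X := by
      have := sub_eq_iff_eq_add.mp hHX; rw [this]; abel
    have h2 : Y * X = X * Y + H := by
      have := sub_eq_iff_eq_add.mp hYX; rw [this]; abel
    have h1' : ∀ z : Module.End ℝ M, H * (X * z) = X * (H * z) + X * z := by
      intro z; rw [← mul_assoc, h1]; noncomm_ring
    have h2' : ∀ z : Module.End ℝ M, Y * (X * z) = X * (Y * z) + H * z := by
      intro z; rw [← mul_assoc, h2]; noncomm_ring
    rw [hG]
    simp only [sub_mul, mul_sub, smul_mul_assoc, mul_smul_comm, mul_add, add_mul, sub_mul,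
      mul_one, one_mul, mul_assoc, smul_add, smul_sub, h1, h2, h1', h2']
    module
  -- eigenvalue of G on m
  set lam : ℝ := -(1 / 2) * ((p : ℝ) * (2 * n - 1 + p)) with hlam
  have hGm : G m = lam • m := by
    rw [hG]
    simp only [LinearMap.sub_apply, LinearMap.smul_apply, Module.End.mul_apply,
      LinearMap.add_apply, LinearMap.sub_apply, Module.End.one_apply, hYm, hHm, map_zero,
      map_smul, map_add, smul_smul, smul_add, smul_sub]
    rw [hlam]
    module
  -- eigenvalue on X^(k-p) m
  have hGv : G ((X ^ (k - p)) m) = lam • ((X ^ (k - p)) m) := by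
    have hc : Commute G X := hGX
    have := (hc.pow_right (k - p))
    calc G ((X ^ (k - p)) m) = (G * X ^ (k - p)) m := rfl
      _ = (X ^ (k - p) * G) m := by rw [this]
      _ = (X ^ (k - p)) (G m) := rfl
      _ = lam • ((X ^ (k - p)) m) := by rw [hGm, map_smul]
  rw [prod_linear_apply G _ lam hGv]
  have hne : ∀ a b : ℕ, a ≠ b →
      ((a : ℝ) * (2 * n - 1 + a) - (b : ℝ) * (2 * n - 1 + b)) ≠ 0 := by
    intro a b hab
    have key : ((a : ℝ) * (2 * n - 1 + a) - (b : ℝ) * (2 * n - 1 + b))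
        = ((a : ℝ) - b) * ((2 * n - 1) + (a + b)) := by ring
    rw [key]
    have h1 : ((a : ℝ)) ≠ b := by exact_mod_cast hab
    have hn' : (1 : ℝ) ≤ (n : ℝ) := by exact_mod_cast hn
    have ha : (0 : ℝ) ≤ a := Nat.cast_nonneg a
    have hb : (0 : ℝ) ≤ b := Nat.cast_nonneg b
    exact mul_ne_zero (sub_ne_zero.mpr h1) (by nlinarith)
  by_cases hip : i = p
  · subst hip
    rw [if_pos rfl]
    have : (∏ j ∈ (range (k + 1)).erase i,
        ((j : ℝ) * (2 * n - 1 + j) - (i : ℝ) * (2 * n - 1 + i))⁻¹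
          * (2 * lam + (j : ℝ) * (2 * n - 1 + j))) = 1 := by
      apply Finset.prod_eq_one
      intro j hj
      have hji : j ≠ i := (Finset.mem_erase.mp hj).1
      have : 2 * lam + (j : ℝ) * (2 * n - 1 + j)
          = ((j : ℝ) * (2 * n - 1 + j) - (i : ℝ) * (2 * n - 1 + i)) := by
        rw [hlam]; ring
      rw [this, inv_mul_cancel₀ (hne j i hji)]
    rw [this, one_smul]
  · rw [if_neg hip]
    have hpmem : p ∈ (range (k + 1)).erase i :=
      Finset.mem_erase.mpr ⟨fun h => hip h.symm, Finset.mem_range.mpr (Nat.lt_succ_of_le hpk)⟩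
    have : (∏ j ∈ (range (k + 1)).erase i,
        ((j : ℝ) * (2 * n - 1 + j) - (i : ℝ) * (2 * n - 1 + i))⁻¹
          * (2 * lam + (j : ℝ) * (2 * n - 1 + j))) = 0 := by
      apply Finset.prod_eq_zero hpmem
      have : 2 * lam + (p : ℝ) * (2 * n - 1 + p) = 0 := by rw [hlam]; ring
      rw [this, mul_zero]
    rw [this, zero_smul]
end
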